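/- arXiv:1007.2841 — 4 statements merged into one kernel-verified Lean document; each statement's English description precedes it below -/
import Mathlib

section
/- Let L be an odd unimodular lattice of signature (2,1). Then the isometry group O(L) acts transitively on the set {d ∈ L : ⟨d,d⟩ = -1}/±1 of (-1)-vectors modulo sign. -/
set_option maxHeartbeats 1000000

open Matrix


lemma tr2 {α : Type*} (a b c d : α) : (!![a, b; c, d])ᵀ = !![a, c; b, d] := by
  ext i j; fin_cases i <;> fin_cases j <;> rfl

lemma reduce2_aux : ∀ n : ℕ, ∀ a b c : ℤ, a.natAbs ≤ n → 0 < a → a * c - b * b = 1 →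
    ∃ S : Matrix (Fin 2) (Fin 2) ℤ, IsUnit S.det ∧ Sᵀ * !![a, b; b, c] * S = 1 := by
  intro n
  induction n with
  | zero => intro a b c h ha _; omega
  | succ n ih =>
    intro a b c hn ha hdet
    by_cases h1 : a = 1
    · subst h1
      refine ⟨!![1, -b; 0, 1], ?_, ?_⟩
      · simp [Matrix.det_fin_two_of]
      · rw [tr2]
        ext i j
        fin_cases i <;> fin_cases j <;>
          simp [Matrix.mul_apply, Fin.sum_univ_two, Matrix.one_apply] <;> nlinarith
    · have ha2 : 2 ≤ a := by omega
      set q : ℤ := (2 * b + a) / (2 * a) with hq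
      set b' : ℤ := b - q * a with hb'
      set c' : ℤ := c - 2 * q * b + q * q * a with hc'
      have hdm := Int.mul_ediv_add_emod (2 * b + a) (2 * a)
      have hr0 : 0 ≤ (2 * b + a) % (2 * a) := Int.emod_nonneg _ (by positivity)
      have hr1 : (2 * b + a) % (2 * a) < 2 * a := Int.emod_lt_of_pos _ (by positivity)
      have hlow : -a ≤ 2 * b' := by rw [hb', hq]; linarith [hdm]
      have hhigh : 2 * b' < a := by rw [hb', hq]; linarith [hdm]
      have hdet' : a * c' - b' * b' = 1 := by rw [hb', hc']; linear_combination hdet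
      have hb2 : 4 * (b' * b') ≤ a * a := by nlinarith
      have hc'pos : 0 < c' := by nlinarith
      have hc'lt : c' < a := by nlinarith
      obtain ⟨S', hS'u, hS'⟩ :=
        ih c' (-b') a (by omega) hc'pos (by linear_combination hdet')
      refine ⟨!![-q, -1; 1, 0] * S', ?_, ?_⟩
      · rw [Matrix.det_mul]
        simp only [Matrix.det_fin_two_of]
        simpa using hS'u
      · have key : (!![-q, -1; 1, 0] : Matrix (Fin 2) (Fin 2) ℤ)ᵀ * !![a, b; b, c] *
            !![-q, -1; 1, 0] = !![c', -b'; -b', a] := by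
          rw [tr2]
          ext i j
          fin_cases i <;> fin_cases j <;>
            simp [Matrix.mul_apply, Fin.sum_univ_two, hb', hc'] <;> ring
        calc (!![-q, -1; 1, 0] * S')ᵀ * !![a, b; b, c] * (!![-q, -1; 1, 0] * S')
            = S'ᵀ * ((!![-q, -1; 1, 0] : Matrix (Fin 2) (Fin 2) ℤ)ᵀ * !![a, b; b, c] *
              !![-q, -1; 1, 0]) * S' := by
              simp only [Matrix.transpose_mul, Matrix.mul_assoc]
          _ = 1 := by rw [key]; exact hS'

lemma reduce2 (a b c : ℤ) (ha : 0 < a) (hdet : a * c - b * b = 1) :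
    ∃ S : Matrix (Fin 2) (Fin 2) ℤ, IsUnit S.det ∧ Sᵀ * !![a, b; b, c] * S = 1 :=
  reduce2_aux a.natAbs a b c le_rfl ha hdet

lemma complete_basis (d : Fin 3 → ℤ) (f : (Fin 3 → ℤ) →ₗ[ℤ] ℤ) (hfd : f d = -1) :
    ∃ b : Module.Basis (Fin 3) ℤ (Fin 3 → ℤ), b 0 = d ∧ f (b 1) = 0 ∧ f (b 2) = 0 := by
  set K := LinearMap.ker f with hK
  have hker : ∀ x : Fin 3 → ℤ, x + f x • d ∈ K := by
    intro x
    rw [hK, LinearMap.mem_ker, map_add, _root_.map_smul, hfd, smul_eq_mul]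
    ring
  let F : (ℤ × K) →ₗ[ℤ] (Fin 3 → ℤ) :=
    (LinearMap.toSpanSingleton ℤ _ d).comp (LinearMap.fst ℤ ℤ K)
      + K.subtype.comp (LinearMap.snd ℤ ℤ K)
  let G : (Fin 3 → ℤ) →ₗ[ℤ] (ℤ × K) :=
    (-f).prod ((LinearMap.id + f.smulRight d).codRestrict K hker)
  have hF : ∀ z (k : K), F (z, k) = z • d + (k : Fin 3 → ℤ) := fun z k => rfl
  have hG : ∀ x, G x = (-(f x), ⟨x + f x • d, hker x⟩) := fun x => rfl
  have hFG : F.comp G = LinearMap.id := by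
    apply LinearMap.ext; intro x
    rw [LinearMap.comp_apply, hG, hF, LinearMap.id_apply]
    module
  have hGF : G.comp F = LinearMap.id := by
    apply LinearMap.ext
    rintro ⟨z, k, hk⟩
    have hfk : f k = 0 := hk
    rw [LinearMap.comp_apply, hF, hG, LinearMap.id_apply]
    have h1 : f (z • d + k) = -z := by
      rw [map_add, _root_.map_smul, hfd, hfk, smul_eq_mul]; ring
    refine Prod.ext ?_ (Subtype.ext ?_)
    · show -(f (z • d + k)) = z
      rw [h1]; ring
    · show (z • d + k) + f (z • d + k) • d = k
      rw [h1]
      module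
  let φ : (ℤ × K) ≃ₗ[ℤ] (Fin 3 → ℤ) := LinearEquiv.ofLinear F G hFG hGF
  have hfin : Module.finrank ℤ K = 2 := by
    have h3 : Module.finrank ℤ (ℤ × K) = 3 := by
      rw [φ.finrank_eq]
      simp [Module.finrank_pi]
    rw [Module.finrank_prod, Module.finrank_self] at h3
    omega
  have hcard : Fintype.card (Module.Free.ChooseBasisIndex ℤ K) = 2 := by
    rw [← Module.finrank_eq_card_chooseBasisIndex]; exact hfin
  let bK : Module.Basis (Fin 2) ℤ K :=
    (Module.Free.chooseBasis ℤ K).reindex (Fintype.equivFinOfCardEq hcard)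
  let e : Fin 1 ⊕ Fin 2 ≃ Fin 3 := finSumFinEquiv
  let b : Module.Basis (Fin 3) ℤ (Fin 3 → ℤ) :=
    (((Module.Basis.singleton (Fin 1) ℤ).prod bK).map φ).reindex e
  have hb : ∀ j : Fin 3, b j = φ (((Module.Basis.singleton (Fin 1) ℤ).prod bK) (e.symm j)) := by
    intro j; simp [b]
  have hsymm0 : e.symm (0 : Fin 3) = Sum.inl 0 := by decide
  have hker' : ∀ (j : Fin 3) (i : Fin 2), e.symm j = Sum.inr i → f (b j) = 0 := by
    intro j i hj
    have hbj : b j = φ ((0 : ℤ), bK i) := by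
      rw [hb, hj]
      congr 1
      exact Prod.ext (Module.Basis.prod_apply_inr_fst _ _ _) (by rw [Module.Basis.prod_apply_inr_snd])
    rw [hbj]
    show f (F (0, bK i)) = 0
    rw [hF, zero_smul, zero_add]
    exact (bK i).2
  refine ⟨b, ?_, ?_, ?_⟩
  · rw [hb, hsymm0]
    have : ((Module.Basis.singleton (Fin 1) ℤ).prod bK) (Sum.inl 0) = ((1 : ℤ), (0 : K)) := by
      refine Prod.ext ?_ ?_
      · rw [Module.Basis.prod_apply_inl_fst, Module.Basis.singleton_apply]
      · rw [Module.Basis.prod_apply_inl_snd]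
    rw [this]
    show F (1, 0) = d
    rw [hF]
    simp
  · exact hker' 1 0 (by decide)
  · exact hker' 2 1 (by decide)

lemma congr_dot {R : Type*} [CommRing R] (M A : Matrix (Fin 3) (Fin 3) R) (x y : Fin 3 → R) :
    x ⬝ᵥ ((Mᵀ * A * M).mulVec y) = (M.mulVec x) ⬝ᵥ (A.mulVec (M.mulVec y)) := by
  simp [Matrix.mul_apply, Matrix.mulVec, dotProduct, Fin.sum_univ_three]
  ring

lemma detA_eq (A : Matrix (Fin 3) (Fin 3) ℤ)
    (hunimod : A.det.natAbs = 1)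
    (hsig : ∃ P : Matrix (Fin 3) (Fin 3) ℝ, IsUnit P.det ∧
      Pᵀ * A.map (Int.cast : ℤ → ℝ) * P = Matrix.diagonal ![1, 1, -1]) :
    A.det = -1 := by
  obtain ⟨P, hP, hPA⟩ := hsig
  have h1 : (Pᵀ * A.map (Int.cast : ℤ → ℝ) * P).det = -1 := by
    rw [hPA, Matrix.det_diagonal]
    simp [Fin.prod_univ_three]
  rw [Matrix.det_mul, Matrix.det_mul, Matrix.det_transpose] at h1
  have hAr : (A.map (Int.cast : ℤ → ℝ)).det = (A.det : ℝ) :=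
    (RingHom.map_det (Int.castRingHom ℝ) A).symm
  rw [hAr] at h1
  have hPd : P.det ≠ 0 := hP.ne_zero
  have hsq : (0:ℝ) < P.det * P.det := mul_self_pos.mpr hPd
  have : (A.det : ℝ) < 0 := by nlinarith
  have : A.det < 0 := by exact_mod_cast this
  omega


lemma dot_symm {R : Type*} [CommRing R] {n : Type*} [Fintype n]
    (A : Matrix n n R) (hsymm : Aᵀ = A) (x y : n → R) :
    x ⬝ᵥ A.mulVec y = y ⬝ᵥ A.mulVec x := by
  calc x ⬝ᵥ A.mulVec y = x ᵥ* A ⬝ᵥ y := dotProduct_mulVec _ _ _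
    _ = x ᵥ* Aᵀ ⬝ᵥ y := by rw [hsymm]
    _ = A.mulVec x ⬝ᵥ y := by rw [vecMul_transpose]
    _ = y ⬝ᵥ A.mulVec x := dotProduct_comm _ _

lemma diagonalize (A : Matrix (Fin 3) (Fin 3) ℤ)
    (hsymm : Aᵀ = A)
    (hdetA : A.det = -1)
    (hsig : ∃ P : Matrix (Fin 3) (Fin 3) ℝ, IsUnit P.det ∧
      Pᵀ * A.map (Int.cast : ℤ → ℝ) * P = Matrix.diagonal ![1, 1, -1])
    (d : Fin 3 → ℤ) (hd : d ⬝ᵥ A.mulVec d = -1) :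
    ∃ M : Matrix (Fin 3) (Fin 3) ℤ, IsUnit M.det ∧
      Mᵀ * A * M = Matrix.diagonal ![-1, 1, 1] ∧ M.mulVec (Pi.single 0 1) = d := by
  classical
  let f : (Fin 3 → ℤ) →ₗ[ℤ] ℤ :=
    { toFun := fun x => d ⬝ᵥ A.mulVec x
      map_add' := fun x y => by
        simp [Matrix.mulVec, dotProduct, Fin.sum_univ_three]; ring
      map_smul' := fun z x => by
        simp [Matrix.mulVec, dotProduct, Fin.sum_univ_three]; ring }
  have hfapp : ∀ x, f x = d ⬝ᵥ A.mulVec x := fun _ => rfl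
  obtain ⟨b, hb0, hb1, hb2⟩ := complete_basis d f (by rw [hfapp]; exact hd)
  set B : Matrix (Fin 3) (Fin 3) ℤ := Matrix.of (fun i j => b j i) with hB
  have hBdet : IsUnit B.det := by
    have h := (Pi.basisFun ℤ (Fin 3)).isUnit_det b
    rwa [Module.Basis.det_apply, show (Pi.basisFun ℤ (Fin 3)).toMatrix ⇑b = B by
      ext i j; simp [Module.Basis.toMatrix_apply, hB]] at h
  set C : Matrix (Fin 3) (Fin 3) ℤ := Bᵀ * A * B with hCdef
  have hC : ∀ i j, C i j = b i ⬝ᵥ A.mulVec (b j) := by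
    intro i j
    simp [hCdef, hB, Matrix.mul_apply, Matrix.mulVec, dotProduct, Fin.sum_univ_three]
    ring
  have hCs : ∀ i j, C j i = C i j := by
    intro i j; rw [hC, hC]; exact dot_symm A hsymm _ _
  have h00 : C 0 0 = -1 := by rw [hC, hb0]; exact hd
  have h01 : C 0 1 = 0 := by rw [hC, hb0]; rw [hfapp] at hb1; exact hb1
  have h02 : C 0 2 = 0 := by rw [hC, hb0]; rw [hfapp] at hb2; exact hb2
  set aa := C 1 1 with haa
  set bb := C 1 2 with hbb
  set cc := C 2 2 with hcc
  have hCex : C = !![-1, 0, 0; 0, aa, bb; 0, bb, cc] := by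
    ext i j
    fin_cases i <;> fin_cases j <;>
      simp [h00, h01, h02, hCs 0 1, hCs 0 2, hCs 1 2, haa, hbb, hcc,
        Matrix.vecHead, Matrix.vecTail]
  -- determinant
  have hBdet2 : B.det * B.det = 1 := by
    rcases Int.isUnit_iff.mp hBdet with h | h <;> rw [h] <;> ring
  have hCdet : C.det = -1 := by
    rw [hCdef, Matrix.det_mul, Matrix.det_mul, Matrix.det_transpose, hdetA]
    linear_combination -hBdet2
  have hdet2 : aa * cc - bb * bb = 1 := by
    rw [hCex, Matrix.det_fin_three] at hCdet
    simp at hCdet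
    nlinarith [hCdet]
  -- positivity of aa
  have haapos : 0 < aa := by
    by_contra hneg
    push_neg at hneg
    have haane : aa ≠ 0 := by intro h; rw [h] at hdet2; nlinarith
    have haalt : aa < 0 := lt_of_le_of_ne hneg haane
    have hcclt : cc < 0 := by nlinarith
    -- real computation
    obtain ⟨P, hPu, hPA⟩ := hsig
    set Ar : Matrix (Fin 3) (Fin 3) ℝ := A.map (Int.cast : ℤ → ℝ) with hAr
    set Br : Matrix (Fin 3) (Fin 3) ℝ := B.map (Int.cast : ℤ → ℝ) with hBr
    have hBrd : Br.det = (B.det : ℝ) := (RingHom.map_det (Int.castRingHom ℝ) B).symm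
    have hBru : IsUnit Br.det := by
      refine isUnit_iff_ne_zero.mpr ?_
      rcases Int.isUnit_iff.mp hBdet with h | h <;> rw [hBrd, h] <;> norm_num
    have hBrinv : Br * Br⁻¹ = 1 := Matrix.mul_nonsing_inv _ hBru
    set e0 : Fin 3 → ℝ := Pi.single 0 1 with he0
    set y : Fin 3 → ℝ := P.mulVec e0 with hy
    have hy1 : y ⬝ᵥ Ar.mulVec y = 1 := by
      have := congr_dot P Ar e0 e0
      rw [hPA] at this
      rw [hy, ← this]
      simp [he0, Matrix.mulVec, dotProduct, Fin.sum_univ_three,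
        Matrix.diagonal, Pi.single_apply]
    set x : Fin 3 → ℝ := Br⁻¹.mulVec y with hx
    have hxy : Br.mulVec x = y := by
      rw [hx, Matrix.mulVec_mulVec, hBrinv, Matrix.one_mulVec]
    have hCr : (C.map (Int.cast : ℤ → ℝ)) = Brᵀ * Ar * Br := by
      ext i j
      simp [hCdef, hBr, hAr, Matrix.mul_apply, Matrix.map_apply, Fin.sum_univ_three]
    have hx1 : x ⬝ᵥ (C.map (Int.cast : ℤ → ℝ)).mulVec x = 1 := by
      rw [hCr, congr_dot, hxy, hy1]
    rw [hCex] at hx1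
    have hmap : (!![(-1:ℤ), 0, 0; 0, aa, bb; 0, bb, cc]).map (Int.cast : ℤ → ℝ)
        = !![(-1:ℝ), 0, 0; 0, (aa:ℝ), (bb:ℝ); 0, (bb:ℝ), (cc:ℝ)] := by
      ext i j; fin_cases i <;> fin_cases j <;> norm_num [Matrix.map_apply]
    rw [hmap] at hx1
    have hexp : -(x 0)^2 + (aa:ℝ) * (x 1)^2 + 2*(bb:ℝ)*(x 1)*(x 2) + (cc:ℝ)*(x 2)^2 = 1 := by
      rw [← hx1]
      simp [Matrix.mulVec, dotProduct, Fin.sum_univ_three,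
        Matrix.vecHead, Matrix.vecTail, Function.comp]
      ring
    have haR : (aa:ℝ) < 0 := by exact_mod_cast haalt
    have hcR : (cc:ℝ) < 0 := by exact_mod_cast hcclt
    have hdR : (aa:ℝ) * (cc:ℝ) - (bb:ℝ)*(bb:ℝ) = 1 := by exact_mod_cast hdet2
    nlinarith [sq_nonneg ((aa:ℝ) * x 1 + (bb:ℝ) * x 2), sq_nonneg (x 0), sq_nonneg (x 2),
      mul_pos (neg_pos.mpr haR) (neg_pos.mpr hcR)]
  -- reduce the 2x2 block
  obtain ⟨S, hSu, hS⟩ := reduce2 aa bb cc haapos hdet2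
  set T : Matrix (Fin 3) (Fin 3) ℤ :=
    !![1, 0, 0; 0, S 0 0, S 0 1; 0, S 1 0, S 1 1] with hT
  have hTdet : T.det = S.det := by
    rw [hT, Matrix.det_fin_three, Matrix.det_fin_two]
    simp
  refine ⟨B * T, ?_, ?_, ?_⟩
  · rw [Matrix.det_mul, hTdet]
    exact hBdet.mul hSu
  · have e00 := congrFun (congrFun hS 0) 0
    have e01 := congrFun (congrFun hS 0) 1
    have e10 := congrFun (congrFun hS 1) 0
    have e11 := congrFun (congrFun hS 1) 1
    simp [Matrix.mul_apply, Fin.sum_univ_two, Matrix.one_apply] at e00 e01 e10 e11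
    have : (B * T)ᵀ * A * (B * T) = Tᵀ * C * T := by
      rw [hCdef]
      simp only [Matrix.transpose_mul, Matrix.mul_assoc]
    rw [this, hCex]
    ext i j
    fin_cases i <;> fin_cases j <;>
      simp [hT, Matrix.mul_apply, Fin.sum_univ_three, Matrix.diagonal, Matrix.one_apply,
        Matrix.vecHead, Matrix.vecTail] <;>
      first
        | linear_combination e00
        | linear_combination e01
        | linear_combination e10
        | linear_combination e11
        | ring
  · have hTe : T.mulVec (Pi.single 0 1) = Pi.single 0 1 := by
      ext i
      fin_cases i <;>
        simp [hT, Matrix.mulVec, dotProduct, Fin.sum_univ_three, Pi.single_apply]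
    have hBcol : ∀ i, B i 0 = d i := fun i => by
      show b 0 i = d i
      rw [hb0]
    rw [← Matrix.mulVec_mulVec, hTe]
    ext i
    simp [Matrix.mulVec, dotProduct, Fin.sum_univ_three, Pi.single_apply]
    exact hBcol i

/-- Let `L` be an odd unimodular lattice of signature (2,1) (realized as
`ℤ³` with Gram matrix `A`). Then the isometry group `O(L)` acts transitively on the
set of `(-1)`-vectors modulo `±1`. -/
theorem stmt2 (A : Matrix (Fin 3) (Fin 3) ℤ)
    (hsymm : Aᵀ = A)
    (hodd : ∃ x : Fin 3 → ℤ, Odd (x ⬝ᵥ A.mulVec x))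
    (hunimod : A.det.natAbs = 1)
    (hsig : ∃ P : Matrix (Fin 3) (Fin 3) ℝ, IsUnit P.det ∧
      Pᵀ * A.map (Int.cast : ℤ → ℝ) * P = Matrix.diagonal ![1, 1, -1])
    (d d' : Fin 3 → ℤ)
    (hd : d ⬝ᵥ A.mulVec d = -1) (hd' : d' ⬝ᵥ A.mulVec d' = -1) :
    ∃ g : Matrix (Fin 3) (Fin 3) ℤ, IsUnit g.det ∧ gᵀ * A * g = A ∧
      (g.mulVec d = d' ∨ g.mulVec d = -d') := by
  have hdetA := detA_eq A hunimod hsig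
  obtain ⟨M, hMu, hMA, hMd⟩ := diagonalize A hsymm hdetA hsig d hd
  obtain ⟨M', hM'u, hM'A, hM'd⟩ := diagonalize A hsymm hdetA hsig d' hd'
  have hMinv : M * M⁻¹ = 1 := Matrix.mul_nonsing_inv _ hMu
  have hinvM : M⁻¹ * M = 1 := Matrix.nonsing_inv_mul _ hMu
  refine ⟨M' * M⁻¹, ?_, ?_, Or.inl ?_⟩
  · rw [Matrix.det_mul]
    exact hM'u.mul (Matrix.isUnit_nonsing_inv_det M hMu)
  · calc (M' * M⁻¹)ᵀ * A * (M' * M⁻¹)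
        = M⁻¹ᵀ * (M'ᵀ * A * M') * M⁻¹ := by
          simp only [Matrix.transpose_mul, Matrix.mul_assoc]
      _ = M⁻¹ᵀ * (Mᵀ * A * M) * M⁻¹ := by rw [hM'A, hMA]
      _ = (M * M⁻¹)ᵀ * A * (M * M⁻¹) := by
          simp only [Matrix.transpose_mul, Matrix.mul_assoc]
      _ = A := by rw [hMinv]; simp
  · have h1 : M⁻¹.mulVec d = Pi.single 0 1 := by
      rw [← hMd, Matrix.mulVec_mulVec, hinvM, Matrix.one_mulVec]
    rw [← Matrix.mulVec_mulVec, h1, hM'd]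
end

section
/- Let M^⊥ = ⟨2⟩ ⊕ ⟨2⟩ ⊕ ⟨-2⟩, i.e., Z³ with the diagonal bilinear form diag(2,2,-2). Then O(M^⊥) acts transitively on the set Δ/±1, where Δ = {d ∈ M^⊥ : ⟨d,d⟩ = -2} is the set of roots modulo sign. -/
open Matrix

private abbrev Jm : Matrix (Fin 3) (Fin 3) ℤ := Matrix.diagonal ![2, 2, -2]

private abbrev Rm : Matrix (Fin 3) (Fin 3) ℤ := !![-1,-2,2; -2,-1,2; -2,-2,3]

private lemma R_unit : IsUnit Rm.det := by
  rw [Matrix.det_fin_three]; simp [Matrix.vecHead, Matrix.vecTail]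

private lemma R_orth : Rmᵀ * Jm * Rm = Jm := by
  ext i j
  fin_cases i <;> fin_cases j <;>
    simp [Matrix.mul_apply, Fin.sum_univ_three, Matrix.diagonal, Matrix.vecHead,
      Matrix.vecTail, Matrix.transpose_apply]

private lemma R_mulVec (a b c : ℤ) :
    Rm.mulVec ![a, b, c] = ![-a - 2*b + 2*c, -2*a - b + 2*c, -2*a - 2*b + 3*c] := by
  funext i
  fin_cases i <;>
    simp [Matrix.mulVec, dotProduct, Fin.sum_univ_three, Matrix.vecHead,
      Matrix.vecTail] <;> ring

private lemma diag_unit (e0 e1 e2 : ℤ) (h0 : e0^2 = 1) (h1 : e1^2 = 1) (h2 : e2^2 = 1) :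
    IsUnit (Matrix.diagonal ![e0, e1, e2]).det := by
  rw [Matrix.det_diagonal]
  refine IsUnit.of_mul_eq_one (e0 * e1 * e2) ?_
  rw [Fin.prod_univ_three]
  simp only [Matrix.cons_val_zero, Matrix.cons_val_one, Matrix.head_cons, Matrix.cons_val_two,
    Matrix.tail_cons]
  linear_combination e1^2 * e2^2 * h0 + e2^2 * h1 + h2

private lemma diag_orth (e0 e1 e2 : ℤ) (h0 : e0^2 = 1) (h1 : e1^2 = 1) (h2 : e2^2 = 1) :
    (Matrix.diagonal ![e0, e1, e2])ᵀ * Jm * Matrix.diagonal ![e0, e1, e2] = Jm := by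
  ext i j
  fin_cases i <;> fin_cases j <;>
    simp [Matrix.mul_apply, Fin.sum_univ_three, Matrix.diagonal, Matrix.vecHead,
      Matrix.vecTail, Matrix.transpose_apply] <;> ring_nf <;>
    linarith [h0, h1, h2]

private lemma diag_mulVec (e0 e1 e2 a b c : ℤ) :
    (Matrix.diagonal ![e0, e1, e2]).mulVec ![a, b, c] = ![e0*a, e1*b, e2*c] := by
  funext i
  fin_cases i <;>
    simp [Matrix.mulVec_diagonal, Matrix.vecHead, Matrix.vecTail, mul_comm]

/-- sign used in the descent -/
private def sg (x : ℤ) : ℤ := if x < 0 then -1 else 1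

private lemma sg_sq (x : ℤ) : (sg x)^2 = 1 := by
  unfold sg; split <;> norm_num

private lemma sg_mul (x : ℤ) : sg x * x = |x| := by
  unfold sg
  split
  · rename_i h; rw [abs_of_neg h]; ring
  · rename_i h; rw [abs_of_nonneg (not_lt.mp h)]; ring

/-- Main descent lemma: every root can be moved to (0,0,1). -/
private lemma descent : ∀ n : ℕ, ∀ a b c : ℤ, c.natAbs = n → a^2 + b^2 + 1 = c^2 →
    ∃ g : Matrix (Fin 3) (Fin 3) ℤ, IsUnit g.det ∧ gᵀ * Jm * g = Jm ∧
      g.mulVec ![a, b, c] = ![0, 0, 1] := by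
  intro n
  induction n using Nat.strong_induction_on with
  | _ n ih =>
    intro a b c hn h
    by_cases hab : a = 0 ∧ b = 0
    · obtain ⟨ha, hb⟩ := hab
      subst ha; subst hb
      have hc : c = 1 ∨ c = -1 := by
        have h1 : (c - 1) * (c + 1) = 0 := by linear_combination -h
        rcases mul_eq_zero.mp h1 with h2 | h2 <;> omega
      rcases hc with hc | hc
      · subst hc
        exact ⟨1, by simp, by simp, by simp⟩
      · subst hc
        refine ⟨Matrix.diagonal ![1, 1, -1], diag_unit 1 1 (-1) (by norm_num) (by norm_num)
          (by norm_num), diag_orth 1 1 (-1) (by norm_num) (by norm_num) (by norm_num), ?_⟩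
        rw [diag_mulVec]
        norm_num
    · -- both a and b are nonzero
      have nosq : ∀ x y : ℤ, x ≠ 0 → x^2 + 1 ≠ y^2 := by
        intro x y hx heq
        have h1 : 0 < |x| := abs_pos.mpr hx
        have h2 : |x| < |y| := by
          refine lt_of_pow_lt_pow_left₀ 2 (abs_nonneg y) ?_
          rw [sq_abs, sq_abs]; nlinarith
        have h3 : (|x| + 1)^2 ≤ (|y|)^2 :=
          pow_le_pow_left₀ (by positivity) (by omega) 2
        have h4 := sq_abs x
        have h5 := sq_abs y
        nlinarith
      have ha : a ≠ 0 := by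
        rintro rfl
        have hb : b ≠ 0 := fun hb => hab ⟨rfl, hb⟩
        exact nosq b c hb (by linarith)
      have hb : b ≠ 0 := by
        rintro rfl
        exact nosq a c ha (by linarith)
      set a' := |a| with ha'
      set b' := |b| with hb'
      set c' := |c| with hc'
      have ha1 : 0 < a' := abs_pos.mpr ha
      have hb1 : 0 < b' := abs_pos.mpr hb
      have h' : a'^2 + b'^2 + 1 = c'^2 := by
        rw [sq_abs, sq_abs, sq_abs]; exact h
      have hc0 : 0 ≤ c' := abs_nonneg c
      have hc1 : 1 ≤ c' := by nlinarith
      -- key inequalities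
      have key1 : c' < a' + b' := by nlinarith [mul_pos ha1 hb1]
      have key2 : a' + b' < 2 * c' := by nlinarith [sq_nonneg (a' - b')]
      set a2 := -a' - 2*b' + 2*c' with ha2
      set b2 := -2*a' - b' + 2*c' with hb2
      set c2 := -2*a' - 2*b' + 3*c' with hc2
      have h2 : a2^2 + b2^2 + 1 = c2^2 := by
        simp only [ha2, hb2, hc2]; linear_combination h'
      have hlt : c2.natAbs < n := by
        have h3 : -c' < c2 := by omega
        have h4 : c2 < c' := by omega
        have h5 : c' = c ∨ c' = -c := by rw [hc']; exact abs_choice c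
        omega
      obtain ⟨g2, hg2u, hg2o, hg2v⟩ := ih c2.natAbs hlt a2 b2 c2 rfl h2
      refine ⟨g2 * Rm * Matrix.diagonal ![sg a, sg b, sg c], ?_, ?_, ?_⟩
      · rw [Matrix.det_mul, Matrix.det_mul]
        exact (hg2u.mul R_unit).mul (diag_unit _ _ _ (sg_sq a) (sg_sq b) (sg_sq c))
      · calc (g2 * Rm * Matrix.diagonal ![sg a, sg b, sg c])ᵀ * Jm *
              (g2 * Rm * Matrix.diagonal ![sg a, sg b, sg c])
            = (Matrix.diagonal ![sg a, sg b, sg c])ᵀ * (Rmᵀ * (g2ᵀ * Jm * g2) * Rm) *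
              Matrix.diagonal ![sg a, sg b, sg c] := by
              simp only [Matrix.transpose_mul, Matrix.mul_assoc]
          _ = (Matrix.diagonal ![sg a, sg b, sg c])ᵀ * (Rmᵀ * Jm * Rm) *
              Matrix.diagonal ![sg a, sg b, sg c] := by rw [hg2o]
          _ = (Matrix.diagonal ![sg a, sg b, sg c])ᵀ * Jm *
              Matrix.diagonal ![sg a, sg b, sg c] := by rw [R_orth]
          _ = Jm := diag_orth (sg a) (sg b) (sg c) (sg_sq a) (sg_sq b) (sg_sq c)
      · rw [← Matrix.mulVec_mulVec, ← Matrix.mulVec_mulVec, diag_mulVec,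
          sg_mul, sg_mul, sg_mul, ← ha', ← hb', ← hc', R_mulVec, ← ha2, ← hb2, ← hc2, hg2v]

/-- Let `M^⊥ = ⟨2⟩ ⊕ ⟨2⟩ ⊕ ⟨-2⟩`, i.e. `ℤ³` with the bilinear form
`diag(2,2,-2)`. Then `O(M^⊥)` acts transitively on the set of roots
`Δ = {d : ⟨d,d⟩ = -2}` modulo `±1`. -/
theorem stmt3 (d d' : Fin 3 → ℤ)
    (hd : d ⬝ᵥ (Matrix.diagonal ![2, 2, -2] : Matrix (Fin 3) (Fin 3) ℤ).mulVec d = -2)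
    (hd' : d' ⬝ᵥ (Matrix.diagonal ![2, 2, -2] : Matrix (Fin 3) (Fin 3) ℤ).mulVec d' = -2) :
    ∃ g : Matrix (Fin 3) (Fin 3) ℤ, IsUnit g.det ∧
      gᵀ * (Matrix.diagonal ![2, 2, -2]) * g = Matrix.diagonal ![2, 2, -2] ∧
      (g.mulVec d = d' ∨ g.mulVec d = -d') := by
  have expand : ∀ v : Fin 3 → ℤ,
      v ⬝ᵥ (Matrix.diagonal ![2, 2, -2] : Matrix (Fin 3) (Fin 3) ℤ).mulVec v =
        2 * (v 0)^2 + 2 * (v 1)^2 - 2 * (v 2)^2 := by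
    intro v
    simp [dotProduct, Matrix.mulVec_diagonal, Fin.sum_univ_three, Matrix.vecHead,
      Matrix.vecTail]
    ring
  have hq : (d 0)^2 + (d 1)^2 + 1 = (d 2)^2 := by
    have := hd; rw [expand] at this; linarith
  have hq' : (d' 0)^2 + (d' 1)^2 + 1 = (d' 2)^2 := by
    have := hd'; rw [expand] at this; linarith
  have hdv : d = ![d 0, d 1, d 2] := by
    funext i; fin_cases i <;> rfl
  have hdv' : d' = ![d' 0, d' 1, d' 2] := by
    funext i; fin_cases i <;> rfl
  obtain ⟨g, hgu, hgo, hgv⟩ := descent _ (d 0) (d 1) (d 2) rfl hq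
  obtain ⟨g', hgu', hgo', hgv'⟩ := descent _ (d' 0) (d' 1) (d' 2) rfl hq'
  refine ⟨g'⁻¹ * g, ?_, ?_, Or.inl ?_⟩
  · rw [Matrix.det_mul]
    exact ((Matrix.isUnit_nonsing_inv_det g' hgu')).mul hgu
  · have hinv : g' * g'⁻¹ = 1 := Matrix.mul_nonsing_inv g' hgu'
    have horth : (g'⁻¹)ᵀ * Jm * g'⁻¹ = Jm := by
      calc (g'⁻¹)ᵀ * Jm * g'⁻¹ = (g'⁻¹)ᵀ * (g'ᵀ * Jm * g') * g'⁻¹ := by rw [hgo']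
        _ = (g' * g'⁻¹)ᵀ * Jm * (g' * g'⁻¹) := by
              simp only [Matrix.transpose_mul, Matrix.mul_assoc]
        _ = Jm := by rw [hinv, Matrix.transpose_one, Matrix.one_mul, Matrix.mul_one]
    calc (g'⁻¹ * g)ᵀ * Jm * (g'⁻¹ * g)
        = gᵀ * ((g'⁻¹)ᵀ * Jm * g'⁻¹) * g := by
          simp only [Matrix.transpose_mul, Matrix.mul_assoc]
      _ = gᵀ * Jm * g := by rw [horth]
      _ = Jm := hgo
  · have h1 : (g'⁻¹ * g).mulVec d = g'⁻¹.mulVec (g.mulVec d) := by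
      rw [← Matrix.mulVec_mulVec]
    rw [h1, hdv, hgv, ← hgv', Matrix.mulVec_mulVec, Matrix.nonsing_inv_mul g' hgu',
      Matrix.one_mulVec, ← hdv']
end

section
/- The map c : Δ → P²(C) defined by c(z) = ((1+z²)/2 : (1-z²)/(2i) : z) is a biholomorphism from the open unit disc Δ = {z ∈ C : |z| < 1} onto the domain Ω⁺ = {(x:y:z) ∈ P²(C) : x² + y² - z² = 0, |x|² + |y|² - |z|² > 0, |x+iy| > |x-iy|}. -/
open Complex

lemma keyA (z : ℂ) : (1 + z ^ 2) / 2 + I * ((1 - z ^ 2) / (2 * I)) = 1 := by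
  field_simp; ring

lemma keyB (z : ℂ) : (1 + z ^ 2) / 2 - I * ((1 - z ^ 2) / (2 * I)) = z ^ 2 := by
  rw [mul_div_assoc', mul_comm I, mul_div_mul_right _ _ Complex.I_ne_zero]
  ring

lemma normsqs (z : ℂ) :
    (‖(1 + z ^ 2)/2‖) ^ 2 + (‖(1 - z ^ 2)/(2*I)‖) ^ 2
      - (‖z‖) ^ 2 = (1 - ‖z‖ ^ 2)^2 / 2 := by
  simp only [Complex.sq_norm]
  simp only [map_div₀, map_mul, pow_two, Complex.normSq_apply,
    Complex.add_re, Complex.add_im, Complex.sub_re, Complex.sub_im, Complex.one_re,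
    Complex.one_im, Complex.mul_re, Complex.mul_im, Complex.I_re, Complex.I_im,
    Complex.re_ofNat, Complex.im_ofNat]
  ring

/-- The map `c(z) = ((1+z²)/2 : (1-z²)/(2i) : z)` is a biholomorphism from
the unit disc onto `Ω⁺ = {(x:y:z) ∈ P²(ℂ) : x²+y²-z²=0, |x|²+|y|²-|z|²>0, |x+iy|>|x-iy|}`.
Points of `P²(ℂ)` are represented by nonzero vectors `w : Fin 3 → ℂ` up to scaling; the
defining conditions of `Ω⁺` are scale invariant. The claim comprises: holomorphy of the
lift, that `c` lands in `Ω⁺`, injectivity and surjectivity up to scalars, and that the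
inverse is the (holomorphic, since `w 0 + i·w 1 ≠ 0` on `Ω⁺`) map `w ↦ w 2/(w 0 + i·w 1)`. -/

theorem stmt4 :
    ∃ c : ℂ → (Fin 3 → ℂ),
      (∀ z : ℂ, c z = ![(1 + z ^ 2) / 2, (1 - z ^ 2) / (2 * I), z]) ∧
      -- the lift is holomorphic
      Differentiable ℂ c ∧
      -- c maps the disc into Ω⁺
      (∀ z : ℂ, ‖z‖ < 1 →
        (c z ≠ 0 ∧ (c z 0) ^ 2 + (c z 1) ^ 2 - (c z 2) ^ 2 = 0 ∧
          (‖c z 0‖) ^ 2 + (‖c z 1‖) ^ 2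
            - (‖c z 2‖) ^ 2 > 0 ∧
          ‖c z 0 + I * c z 1‖ > ‖c z 0 - I * c z 1‖)) ∧
      -- injectivity on the disc as a map to P²(ℂ)
      (∀ z w : ℂ, ‖z‖ < 1 → ‖w‖ < 1 →
        (∃ lam : ℂ, lam ≠ 0 ∧ c z = lam • c w) → z = w) ∧
      -- surjectivity onto Ω⁺
      (∀ v : Fin 3 → ℂ, v ≠ 0 →
        v 0 ^ 2 + v 1 ^ 2 - v 2 ^ 2 = 0 →
        (‖v 0‖) ^ 2 + (‖v 1‖) ^ 2
          - (‖v 2‖) ^ 2 > 0 →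
        ‖v 0 + I * v 1‖ > ‖v 0 - I * v 1‖ →
        ∃ z : ℂ, ‖z‖ < 1 ∧ ∃ lam : ℂ, lam ≠ 0 ∧ v = lam • c z) ∧
      -- the inverse is given by the holomorphic expression w ↦ w 2 / (w 0 + i w 1),
      -- which is well defined on Ω⁺ ...
      (∀ v : Fin 3 → ℂ, v ≠ 0 →
        v 0 ^ 2 + v 1 ^ 2 - v 2 ^ 2 = 0 →
        (‖v 0‖) ^ 2 + (‖v 1‖) ^ 2
          - (‖v 2‖) ^ 2 > 0 →
        ‖v 0 + I * v 1‖ > ‖v 0 - I * v 1‖ →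
        v 0 + I * v 1 ≠ 0) ∧
      -- ... and inverts c on the disc
      (∀ z : ℂ, ‖z‖ < 1 → (c z 2) / (c z 0 + I * c z 1) = z) := by
  refine ⟨fun z => ![(1 + z ^ 2) / 2, (1 - z ^ 2) / (2 * I), z], fun z => rfl, ?_, ?_, ?_, ?_, ?_, ?_⟩
  · rw [differentiable_pi]
    intro i
    fin_cases i
    · simp only [Matrix.cons_val_zero]
      exact (differentiable_const _ |>.add (differentiable_pow 2)).div_const _
    · simp only [Matrix.cons_val_one, Matrix.head_cons]
      exact (differentiable_const _ |>.sub (differentiable_pow 2)).div_const _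
    · exact differentiable_id
  · intro z hz
    simp only [Matrix.cons_val_zero, Matrix.cons_val_one, Matrix.head_cons, Matrix.cons_val_two,
      Matrix.tail_cons]
    refine ⟨?_, ?_, ?_, ?_⟩
    · intro h
      have h0 : (1 + z ^ 2) / 2 + I * ((1 - z ^ 2) / (2 * I)) = 1 := keyA z
      have e0 : (![(1 + z ^ 2) / 2, (1 - z ^ 2) / (2 * I), z] : Fin 3 → ℂ) 0 = 0 := by
        rw [h]; rfl
      have e1 : (![(1 + z ^ 2) / 2, (1 - z ^ 2) / (2 * I), z] : Fin 3 → ℂ) 1 = 0 := by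
        rw [h]; rfl
      simp only [Matrix.cons_val_zero, Matrix.cons_val_one, Matrix.head_cons] at e0 e1
      rw [e0, e1] at h0
      simp at h0
    · have hA := keyA z
      have hB := keyB z
      linear_combination ((1 + z ^ 2) / 2 - I * ((1 - z ^ 2) / (2 * I))) * hA + hB
        + ((1 - z ^ 2) / (2 * I)) ^ 2 * Complex.I_sq
    · have h := normsqs z
      have h1 : (0:ℝ) < 1 - ‖z‖ ^ 2 := by nlinarith [norm_nonneg z]
      have : (0:ℝ) < (1 - ‖z‖ ^ 2)^2 / 2 := by nlinarith
      linarith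
    · rw [keyA z, keyB z]
      simpa using (by nlinarith [norm_nonneg z] : ‖z‖ ^ 2 < 1)
  · rintro z w hz hw ⟨lam, hlam, h⟩
    have e0 := congrFun h 0
    have e1 := congrFun h 1
    have e2 := congrFun h 2
    simp only [Pi.smul_apply, smul_eq_mul, Matrix.cons_val_zero, Matrix.cons_val_one,
      Matrix.head_cons, Matrix.cons_val_two, Matrix.tail_cons] at e0 e1 e2
    have hz1 := keyA z
    have hw1 := keyA w
    have hlam1 : lam = 1 := by
      linear_combination hz1 - e0 - I * e1 - lam * hw1
    rw [hlam1, one_mul] at e2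
    exact e2
  · intro v hv hsq hpos hgt
    set a := v 0 + I * v 1 with ha_def
    have ha : a ≠ 0 := by
      intro h
      rw [h] at hgt
      simp at hgt
      exact absurd hgt (not_lt.mpr (norm_nonneg _))
    set b := v 0 - I * v 1 with hb_def
    have hab : v 2 ^ 2 = a * b := by
      rw [ha_def, hb_def]
      linear_combination -hsq + (v 1) ^ 2 * Complex.I_sq
    refine ⟨v 2 / a, ?_, a, ha, ?_⟩
    · have habs : ‖v 2‖ ^ 2 = ‖a‖ * ‖b‖ := by
        rw [← norm_mul, ← hab, norm_pow]
      have h2 : ‖v 2‖ < ‖a‖ := by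
        nlinarith [norm_nonneg (v 2), norm_nonneg b, norm_nonneg a]
      rw [norm_div]
      rw [div_lt_one (norm_pos_iff.mpr ha)]
      exact h2
    · have hz2 : (v 2 / a) ^ 2 = b / a := by
        rw [div_pow, hab]
        field_simp
      funext i
      fin_cases i
      · simp only [Pi.smul_apply, smul_eq_mul, Fin.zero_eta, Matrix.cons_val_zero]
        rw [hz2, ha_def, hb_def]
        have ha' : v 0 + I * v 1 ≠ 0 := ha
        field_simp
        ring
      · simp only [Pi.smul_apply, smul_eq_mul, Fin.mk_one, Matrix.cons_val_one, Matrix.cons_val_zero, Matrix.head_cons]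
        rw [hz2, ha_def, hb_def]
        have ha' : v 1 * I + v 0 ≠ 0 := by rw [mul_comm, add_comm]; exact ha
        field_simp
        have key : v 1 ^ 2 * I ^ 2 * (v 1 * I + v 0)⁻¹ - v 0 ^ 2 * (v 1 * I + v 0)⁻¹
            = v 1 * I - v 0 := by
          rw [← sub_mul, eq_comm, ← div_eq_mul_inv, eq_div_iff ha']; ring
        linear_combination (-1) * key
      · show v 2 = a * (v 2 / a)
        rw [mul_div_cancel₀ _ ha]
  · intro v hv hsq hpos hgt h
    rw [h] at hgt
    simp at hgt
    exact absurd hgt (not_lt.mpr (norm_nonneg _))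
  · intro z hz
    simp only [Matrix.cons_val_zero, Matrix.cons_val_one, Matrix.head_cons, Matrix.cons_val_two,
      Matrix.tail_cons]
    rw [keyA z, div_one]
end

section
/- Let D be a divisor with rational coefficients on a simply connected complex manifold Ω, and suppose φ : Ω \ supp(D) → R_{>0} is smooth with -dd^c log φ = δ_D as currents. If m ∈ Z_{>0} is such that mD is an integral divisor, then G([η]) := exp(m ∫_{[η₀]}^{[η]} ∂ log φ) is a well-defined meromorphic function on Ω with div(G) = mD, and |G|² = φ^m / φ([η₀])^m. -/
open Filter

private lemma analyticAt_sub_zpow (q p : ℂ) (h : p ≠ q) (n : ℤ) :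
    AnalyticAt ℂ (fun z : ℂ => (z - q) ^ n) p := by
  have hb : AnalyticAt ℂ (fun z : ℂ => z - q) p := analyticAt_id.sub analyticAt_const
  cases n with
  | ofNat n => simpa using hb.fun_pow n
  | negSucc n =>
    simp only [zpow_negSucc]
    exact (hb.pow (n + 1)).inv (pow_ne_zero _ (sub_ne_zero.mpr h))

/-- Let `D = ∑_{p ∈ s} a_p · p` be a divisor with rational coefficients on
a simply connected domain `Ω` (here `Ω ⊆ ℂ` open, connected, simply connected), and let
`φ` be smooth positive on `Ω \ supp D` with `-dd^c log φ = δ_D` as currents.  In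
dimension one this current equation means precisely that
`log φ(z) = ∑_p 2 a_p log|z-p| + (harmonic)`, and on simply connected `Ω` the harmonic
function is `Re H` for a holomorphic `H` (hypothesis `hcurrent`).  If `m·D` is an
integral divisor, then there is a well-defined meromorphic function `G` on `Ω` with
`div(G) = mD` (at each `p ∈ s`, `G(z) = (z-p)^{m a_p}·(unit)`), holomorphic and
nonvanishing off `supp D`, normalized by `G(η₀) = 1`, and with
`|G|² = φ^m / φ(η₀)^m`. -/
theorem stmt16 (Ω : Set ℂ) (hΩ : IsOpen Ω) (hconn : IsPreconnected Ω)
    (hsc : SimplyConnectedSpace Ω)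
    (s : Finset ℂ) (hs : (s : Set ℂ) ⊆ Ω) (a : ℂ → ℚ)
    (φ : ℂ → ℝ) (hφpos : ∀ z ∈ Ω \ (s : Set ℂ), 0 < φ z)
    (H : ℂ → ℂ) (hH : DifferentiableOn ℂ H Ω)
    (hcurrent : ∀ z ∈ Ω \ (s : Set ℂ),
      Real.log (φ z)
        = (∑ p ∈ s, 2 * (a p : ℝ) * Real.log ‖z - p‖) + (H z).re)
    (m : ℕ) (hm : 0 < m)
    (hint : ∀ p ∈ s, ∃ k : ℤ, (m : ℚ) * a p = (k : ℚ))
    (η₀ : ℂ) (hη₀ : η₀ ∈ Ω \ (s : Set ℂ)) :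
    ∃ G : ℂ → ℂ,
      DifferentiableOn ℂ G (Ω \ (s : Set ℂ)) ∧
      (∀ z ∈ Ω \ (s : Set ℂ), G z ≠ 0) ∧
      G η₀ = 1 ∧
      (∀ z ∈ Ω \ (s : Set ℂ), ‖G z‖ ^ 2 = φ z ^ m * (φ η₀ ^ m)⁻¹) ∧
      (∀ p ∈ s, ∃ k : ℤ, (m : ℚ) * a p = (k : ℚ) ∧
        ∃ u : ℂ → ℂ, AnalyticAt ℂ u p ∧ u p ≠ 0 ∧
          ∀ᶠ z in nhdsWithin p {p}ᶜ, G z = (z - p) ^ k * u z) := by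
  classical
  set k : ℂ → ℤ := fun p => if hp : p ∈ s then (hint p hp).choose else 0 with hk
  have hka : ∀ p ∈ s, (m : ℚ) * a p = ((k p : ℤ) : ℚ) := fun p hp => by
    simp only [hk, dif_pos hp]; exact (hint p hp).choose_spec
  set E : ℂ → ℂ := fun z => Complex.exp (((m : ℂ) / 2) * H z) with hE
  set P : ℂ → ℂ := fun z => ∏ q ∈ s, (z - q) ^ k q with hP
  have hne : ∀ z ∈ Ω \ (s : Set ℂ), ∀ q ∈ s, z - q ≠ 0 := fun z hz q hq =>
    sub_ne_zero.mpr fun h => hz.2 (h ▸ hq)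
  have hPne : ∀ z ∈ Ω \ (s : Set ℂ), P z ≠ 0 := fun z hz =>
    Finset.prod_ne_zero_iff.mpr fun q hq => zpow_ne_zero _ (hne z hz q hq)
  have hEne : ∀ z, E z ≠ 0 := fun z => Complex.exp_ne_zero _
  set C : ℂ := (P η₀ * E η₀)⁻¹ with hC
  have hCne : C ≠ 0 := inv_ne_zero (mul_ne_zero (hPne η₀ hη₀) (hEne η₀))
  have hPan : ∀ z ∈ Ω \ (s : Set ℂ), AnalyticAt ℂ P z := fun z hz =>
    Finset.analyticAt_fun_prod s fun q hq =>
      analyticAt_sub_zpow q z (fun h => hz.2 (h ▸ hq)) (k q)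
  have hEan : ∀ z ∈ Ω, AnalyticAt ℂ E z := fun z hz =>
    (analyticAt_const.mul (hH.analyticAt (hΩ.mem_nhds hz))).cexp
  -- modulus of P * E
  have habs : ∀ w ∈ Ω \ (s : Set ℂ),
      ‖P w * E w‖ = Real.exp ((m * Real.log (φ w)) / 2) := by
    intro w hw
    have h1 : ‖P w‖ =
        Real.exp (∑ q ∈ s, (k q : ℝ) * Real.log ‖w - q‖) := by
      rw [hP, norm_prod, Real.exp_sum]
      refine Finset.prod_congr rfl fun q hq => ?_
      have hpos : 0 < ‖w - q‖ := norm_pos_iff.mpr (hne w hw q hq)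
      rw [norm_zpow, ← Real.rpow_intCast, Real.rpow_def_of_pos hpos, mul_comm]
    have h2 : ‖E w‖ = Real.exp ((m : ℝ) / 2 * (H w).re) := by
      rw [hE, Complex.norm_exp]
      congr 1
      simp [Complex.mul_re, Complex.div_re]
    rw [norm_mul, h1, h2, ← Real.exp_add, hcurrent w hw]
    congr 1
    have key : ∀ q ∈ s, (k q : ℝ) * Real.log ‖w - q‖
        = (m : ℝ) * (2 * (a q : ℝ) * Real.log ‖w - q‖) / 2 := by
      intro q hq
      have hkq : ((k q : ℝ)) = (m : ℝ) * (a q : ℝ) := by exact_mod_cast (hka q hq).symm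
      rw [hkq]; ring
    rw [Finset.sum_congr rfl key, ← Finset.sum_div, ← Finset.mul_sum]
    ring
  have hexp : ∀ w ∈ Ω \ (s : Set ℂ),
      (Real.exp ((m * Real.log (φ w)) / 2)) ^ 2 = φ w ^ m := by
    intro w hw
    rw [sq, ← Real.exp_add]
    have : (m * Real.log (φ w)) / 2 + (m * Real.log (φ w)) / 2
        = (m : ℝ) * Real.log (φ w) := by ring
    rw [this, Real.exp_nat_mul, Real.exp_log (hφpos w hw)]
  refine ⟨fun z => P z * E z * C, ?_, ?_, ?_, ?_, ?_⟩
  · intro z hz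
    exact (((hPan z hz).mul (hEan z hz.1)).mul
      analyticAt_const).differentiableAt.differentiableWithinAt
  · intro z hz
    exact mul_ne_zero (mul_ne_zero (hPne z hz) (hEne z)) hCne
  · exact mul_inv_cancel₀ (mul_ne_zero (hPne η₀ hη₀) (hEne η₀))
  · intro z hz
    rw [norm_mul, hC, norm_inv, habs z hz, habs η₀ hη₀, mul_pow, inv_pow,
      hexp z hz, hexp η₀ hη₀]
  · intro p hp
    refine ⟨k p, hka p hp,
      fun z => (∏ q ∈ s.erase p, (z - q) ^ k q) * E z * C, ?_, ?_, ?_⟩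
    · have hpΩ : p ∈ Ω := hs hp
      refine (((Finset.analyticAt_fun_prod _ fun q hq => ?_).fun_mul (hEan p hpΩ)).fun_mul
        analyticAt_const)
      exact analyticAt_sub_zpow q p (Ne.symm (Finset.mem_erase.mp hq).1) (k q)
    · refine mul_ne_zero (mul_ne_zero ?_ (hEne p)) hCne
      exact Finset.prod_ne_zero_iff.mpr fun q hq =>
        zpow_ne_zero _ (sub_ne_zero.mpr (Ne.symm (Finset.mem_erase.mp hq).1))
    · refine Eventually.of_forall fun z => ?_
      have h1 : P z = (z - p) ^ k p * ∏ q ∈ s.erase p, (z - q) ^ k q :=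
        (Finset.mul_prod_erase s (fun q => (z - q) ^ k q) hp).symm
      show P z * E z * C = (z - p) ^ k p * ((∏ q ∈ s.erase p, (z - q) ^ k q) * E z * C)
      rw [h1]; ring
end
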